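/- For any compact set K ⊂ ℝ, the class f_SP ∘ Σ(φ_EXP) of functions x ↦ log(1 + exp(Σ_{j=1}^{J} α_j exp(β_j x))), with J ∈ ℕ and (α_j, β_j) ∈ ℝ², is uniformly dense in C(K, ℝ₊₊): for every continuous f : K → (0, ∞) and ε > 0 there exist J and parameters (α_j, β_j) with sup_{x ∈ K} |log(1 + exp(Σ_j α_j exp(β_j x))) − f(x)| < ε. -/

import Mathlib

lemma softplus_lipschitz (a b : ℝ) :
    |Real.log (1 + Real.exp a) - Real.log (1 + Real.exp b)| ≤ |a - b| := by
  have key : ∀ u v : ℝ, u ≤ v →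
      Real.log (1 + Real.exp v) - Real.log (1 + Real.exp u) ≤ v - u := by
    intro u v huv
    have h1 : (0:ℝ) < 1 + Real.exp u := by positivity
    have h2 : 1 + Real.exp v ≤ Real.exp (v - u) * (1 + Real.exp u) := by
      have : Real.exp (v - u) * (1 + Real.exp u) = Real.exp (v - u) + Real.exp v := by
        rw [mul_add, mul_one, ← Real.exp_add]; ring_nf
      rw [this]
      have : (1:ℝ) ≤ Real.exp (v - u) := Real.one_le_exp (by linarith)
      linarith
    calc Real.log (1 + Real.exp v) - Real.log (1 + Real.exp u)
        ≤ Real.log (Real.exp (v - u) * (1 + Real.exp u)) - Real.log (1 + Real.exp u) := by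
          gcongr
      _ = v - u := by
          rw [Real.log_mul (by positivity) (by positivity), Real.log_exp]; ring
  have mono : ∀ u v : ℝ, u ≤ v →
      Real.log (1 + Real.exp u) ≤ Real.log (1 + Real.exp v) := by
    intro u v huv
    gcongr
  rcases le_total a b with h | h
  · rw [abs_sub_comm, abs_of_nonneg (by linarith [mono a b h]), abs_sub_comm,
      abs_of_nonneg (by linarith)]
    exact key a b h
  · rw [abs_of_nonneg (by linarith [mono b a h]), abs_of_nonneg (by linarith)]
    exact key b a h

/-- For any compact `K ⊂ ℝ`, the class
`f_SP ∘ Σ(φ_EXP)` of functions `x ↦ log (1 + exp (∑ⱼ αⱼ exp (βⱼ x)))` is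
uniformly dense in `C(K, ℝ₊₊)`. -/
theorem softplus_expSum_uniformly_dense
    (K : Set ℝ) (hK : IsCompact K)
    (f : ℝ → ℝ) (hf_cont : ContinuousOn f K) (hf_pos : ∀ x ∈ K, 0 < f x)
    (ε : ℝ) (hε : 0 < ε) :
    ∃ (J : ℕ) (α β : Fin J → ℝ),
      ∀ x ∈ K,
        |Real.log (1 + Real.exp (∑ j : Fin J, α j * Real.exp (β j * x))) - f x|
          < ε := by
  rcases K.eq_empty_or_nonempty with rfl | hKne
  · exact ⟨0, 0, 0, fun x hx => absurd hx (Set.notMem_empty x)⟩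
  -- g is the inverse softplus of f
  set g : ℝ → ℝ := fun x => Real.log (Real.exp (f x) - 1) with hg_def
  have hg_cont : ContinuousOn g K := by
    apply ContinuousOn.comp Real.continuousOn_log
      ((Real.continuous_exp.comp_continuousOn hf_cont).sub continuousOn_const)
    intro x hx
    have h1 : (1:ℝ) < Real.exp (f x) := by
      calc (1:ℝ) = Real.exp 0 := Real.exp_zero.symm
      _ < Real.exp (f x) := Real.exp_lt_exp.mpr (hf_pos x hx)
    show Real.exp (f x) - 1 ∈ ({0}ᶜ : Set ℝ)
    simp only [Set.mem_compl_iff, Set.mem_singleton_iff]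
    intro hc
    linarith
  -- Tietze extension of g
  obtain ⟨F, hF⟩ := ContinuousMap.exists_restrict_eq (Y := ℝ) hK.isClosed
    ⟨K.restrict g, continuousOn_iff_continuous_restrict.mp hg_cont⟩
  have hFg : ∀ x ∈ K, F x = g x := by
    intro x hx
    have := congrFun (congrArg DFunLike.coe hF) ⟨x, hx⟩
    exact this
  -- compact image under exp
  have hKe : IsCompact (Real.exp '' K) := hK.image Real.continuous_exp
  set a := sInf (Real.exp '' K) with ha_def
  set b := sSup (Real.exp '' K) with hb_def
  have hane : (Real.exp '' K).Nonempty := hKne.image _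
  have ha_mem : a ∈ Real.exp '' K := hKe.sInf_mem hane
  have ha_pos : 0 < a := by
    obtain ⟨x, -, hxe⟩ := ha_mem
    rw [← hxe]; exact Real.exp_pos x
  have hsub : ∀ x ∈ K, Real.exp x ∈ Set.Icc a b := by
    intro x hx
    exact ⟨csInf_le hKe.bddBelow ⟨x, hx, rfl⟩, le_csSup hKe.bddAbove ⟨x, hx, rfl⟩⟩
  -- h = F ∘ log continuous on [a,b]
  have hh : ContinuousOn (fun y => F (Real.log y)) (Set.Icc a b) := by
    apply F.continuous.comp_continuousOn
    apply Real.continuousOn_log.mono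
    intro y hy
    exact ne_of_gt (lt_of_lt_of_le ha_pos hy.1)
  obtain ⟨p, hp⟩ := exists_polynomial_near_of_continuousOn a b _ hh ε hε
  refine ⟨p.natDegree + 1, fun j => p.coeff j, fun j => (j : ℝ), fun x hx => ?_⟩
  have hsum : (∑ j : Fin (p.natDegree + 1), p.coeff j * Real.exp ((j : ℝ) * x))
      = p.eval (Real.exp x) := by
    rw [Polynomial.eval_eq_sum_range, Fin.sum_univ_eq_sum_range
      (fun j => p.coeff j * Real.exp ((j : ℝ) * x))]
    refine Finset.sum_congr rfl fun i _ => ?_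
    rw [← Real.exp_nat_mul]
  rw [hsum]
  have hclose : |p.eval (Real.exp x) - g x| < ε := by
    have := hp (Real.exp x) (hsub x hx)
    rwa [Real.log_exp, hFg x hx] at this
  have hsp : Real.log (1 + Real.exp (g x)) = f x := by
    rw [hg_def]
    have h1 : (0:ℝ) < Real.exp (f x) - 1 := by
      have : (1:ℝ) < Real.exp (f x) := by
        have := hf_pos x hx
        calc (1:ℝ) = Real.exp 0 := Real.exp_zero.symm
        _ < Real.exp (f x) := Real.exp_lt_exp.mpr this
      linarith
    rw [Real.exp_log h1]
    have : 1 + (Real.exp (f x) - 1) = Real.exp (f x) := by ring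
    rw [this, Real.log_exp]
  calc |Real.log (1 + Real.exp (p.eval (Real.exp x))) - f x|
      = |Real.log (1 + Real.exp (p.eval (Real.exp x))) - Real.log (1 + Real.exp (g x))| := by
        rw [hsp]
    _ ≤ |p.eval (Real.exp x) - g x| := softplus_lipschitz _ _
    _ < ε := hclose
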